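/- Consider the hierarchical system ẋ₁ = f₁(x₁,t), ẋ₂ = f₂(x₁,x₂,t) with continuously differentiable f₁, f₂. If there exist λ₁, λ₂ > 0 such that the symmetric parts of F₁ = ∂f₁/∂x₁ and F₂ = ∂f₂/∂x₂ satisfy F₁ + F₁^T ≤ −2λ₁I and F₂ + F₂^T ≤ −2λ₂I uniformly, and F₂₁ = ∂f₂/∂x₁ is uniformly bounded in operator norm, then any two solutions of the combined system converge to each other exponentially: ‖(x₁(t)−y₁(t), x₂(t)−y₂(t))‖ ≤ C·e^{−λt}‖(x₁(t₀)−y₁(t₀), x₂(t₀)−y₂(t₀))‖ for some constants C ≥ 1 and λ > 0 independent of the initial conditions. -/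

import Mathlib

open Matrix

lemma dotSelfNonneg {n : ℕ} (v : Fin n → ℝ) : 0 ≤ v ⬝ᵥ v :=
  Finset.sum_nonneg fun i _ => mul_self_nonneg _

lemma hasDerivAtDot {n : ℕ} (v : Fin n → ℝ) {F : ℝ → Fin n → ℝ} {F' : Fin n → ℝ} {s : ℝ}
    (h : HasDerivAt F F' s) : HasDerivAt (fun s => v ⬝ᵥ F s) (v ⬝ᵥ F') s := by
  have hi : ∀ i, HasDerivAt (fun s => F s i) (F' i) s := fun i => (hasDerivAt_pi.1 h) i
  simpa [dotProduct] using HasDerivAt.fun_sum (fun i (_ : i ∈ Finset.univ) => ((hi i).const_mul (v i)))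

lemma hasDerivAtDotSelf {n : ℕ} {u : ℝ → Fin n → ℝ} {u' : Fin n → ℝ} {s : ℝ}
    (h : HasDerivAt u u' s) : HasDerivAt (fun t => u t ⬝ᵥ u t) (2 * (u s ⬝ᵥ u')) s := by
  have hi : ∀ i, HasDerivAt (fun t => u t i) (u' i) s := fun i => (hasDerivAt_pi.1 h) i
  have h2 := HasDerivAt.fun_sum (fun i (_ : i ∈ Finset.univ) => ((hi i).mul (hi i)))
  have : ∑ i, (u' i * u s i + u s i * u' i) = 2 * (u s ⬝ᵥ u') := by
    simp only [dotProduct, Finset.mul_sum]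
    exact Finset.sum_congr rfl fun i _ => by ring
  simpa [dotProduct, this] using h2

lemma dotCS {n : ℕ} (a b : Fin n → ℝ) :
    a ⬝ᵥ b ≤ Real.sqrt (a ⬝ᵥ a) * Real.sqrt (b ⬝ᵥ b) := by
  have h := Finset.sum_mul_sq_le_sq_mul_sq Finset.univ a b
  calc a ⬝ᵥ b ≤ |a ⬝ᵥ b| := le_abs_self _
    _ = Real.sqrt ((a ⬝ᵥ b) ^ 2) := (Real.sqrt_sq_eq_abs _).symm
    _ ≤ Real.sqrt ((a ⬝ᵥ a) * (b ⬝ᵥ b)) := by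
        apply Real.sqrt_le_sqrt
        simpa [dotProduct, sq] using h
    _ = Real.sqrt (a ⬝ᵥ a) * Real.sqrt (b ⬝ᵥ b) := Real.sqrt_mul (dotSelfNonneg a) _

lemma dotSym {n : ℕ} (M : Matrix (Fin n) (Fin n) ℝ) (v : Fin n → ℝ) :
    v ⬝ᵥ (M *ᵥ v) = (v ⬝ᵥ ((M + Mᵀ) *ᵥ v)) / 2 := by
  have ht : v ⬝ᵥ (Mᵀ *ᵥ v) = v ⬝ᵥ (M *ᵥ v) := by
    rw [dotProduct_mulVec, vecMul_transpose, dotProduct_comm]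
  rw [add_mulVec, dotProduct_add, ht]
  ring

lemma segIneq {n m : ℕ} (g : (Fin n → ℝ) → Fin m → ℝ)
    (M : (Fin n → ℝ) → Matrix (Fin m) (Fin n) ℝ)
    (hM : ∀ x, HasFDerivAt g (LinearMap.toContinuousLinearMap (M x).mulVecLin) x)
    (w : Fin m → ℝ) (a b : Fin n → ℝ) (c : ℝ)
    (hc : ∀ x, w ⬝ᵥ (M x *ᵥ (a - b)) ≤ c) :
    w ⬝ᵥ (g a - g b) ≤ c := by
  set v := a - b with hv
  set φ : ℝ → Fin n → ℝ := fun s => b + s • v with hφ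
  have hφd : ∀ s : ℝ, HasDerivAt φ v s := by
    intro s
    have h1 : HasDerivAt (fun s : ℝ => s • v) v s := by
      simpa using (hasDerivAt_id s).smul_const v
    simpa [hφ] using h1.const_add b
  have hgd : ∀ s : ℝ, HasDerivAt (fun s => w ⬝ᵥ g (φ s)) (w ⬝ᵥ (M (φ s) *ᵥ v)) s := by
    intro s
    have h2 := (hM (φ s)).comp_hasDerivAt s (hφd s)
    exact hasDerivAtDot w (by simpa [Function.comp_def] using h2)
  have hmono : Monotone (fun s => c * s - w ⬝ᵥ g (φ s)) := by
    have hd : ∀ s, HasDerivAt (fun s => c * s - w ⬝ᵥ g (φ s)) (c - w ⬝ᵥ (M (φ s) *ᵥ v)) s := by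
      intro s
      have := ((hasDerivAt_id s).const_mul c).fun_sub (hgd s)
      simpa using this
    apply monotone_of_deriv_nonneg
    · exact fun s => (hd s).differentiableAt
    · intro s
      rw [(hd s).deriv]
      linarith [hc (φ s)]
  have h01 := hmono (zero_le_one (α := ℝ))
  have hφ0 : φ 0 = b := by simp [hφ]
  have hφ1 : φ 1 = a := by simp [hφ, hv]
  simp only [hφ0, hφ1, mul_zero, mul_one, dotProduct_sub] at h01 ⊢
  linarith

set_option maxHeartbeats 1000000 in
theorem stmt13 (n₁ n₂ : ℕ)
    (f₁ : (Fin n₁ → ℝ) → ℝ → Fin n₁ → ℝ)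
    (f₂ : (Fin n₁ → ℝ) → (Fin n₂ → ℝ) → ℝ → Fin n₂ → ℝ)
    (F₁ : (Fin n₁ → ℝ) → ℝ → Matrix (Fin n₁) (Fin n₁) ℝ)
    (F₂ : (Fin n₁ → ℝ) → (Fin n₂ → ℝ) → ℝ → Matrix (Fin n₂) (Fin n₂) ℝ)
    (F₂₁ : (Fin n₁ → ℝ) → (Fin n₂ → ℝ) → ℝ → Matrix (Fin n₂) (Fin n₁) ℝ)
    (hf₁ : ContDiff ℝ 1 (fun p : (Fin n₁ → ℝ) × ℝ => f₁ p.1 p.2))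
    (hf₂ : ContDiff ℝ 1 (fun p : (Fin n₁ → ℝ) × (Fin n₂ → ℝ) × ℝ => f₂ p.1 p.2.1 p.2.2))
    (hF₁ : ∀ x₁ t, HasFDerivAt (fun y => f₁ y t)
        (LinearMap.toContinuousLinearMap (Matrix.mulVecLin (F₁ x₁ t))) x₁)
    (hF₂ : ∀ x₁ x₂ t, HasFDerivAt (fun y => f₂ x₁ y t)
        (LinearMap.toContinuousLinearMap (Matrix.mulVecLin (F₂ x₁ x₂ t))) x₂)
    (hF₂₁ : ∀ x₁ x₂ t, HasFDerivAt (fun y => f₂ y x₂ t)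
        (LinearMap.toContinuousLinearMap (Matrix.mulVecLin (F₂₁ x₁ x₂ t))) x₁)
    (t₀ lam₁ lam₂ B : ℝ) (hlam₁ : 0 < lam₁) (hlam₂ : 0 < lam₂) (hB : 0 ≤ B)
    (hc₁ : ∀ x₁ t, t₀ ≤ t → ∀ v : Fin n₁ → ℝ,
        v ⬝ᵥ ((F₁ x₁ t + (F₁ x₁ t)ᵀ) *ᵥ v) ≤ -2 * lam₁ * (v ⬝ᵥ v))
    (hc₂ : ∀ x₁ x₂ t, t₀ ≤ t → ∀ v : Fin n₂ → ℝ,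
        v ⬝ᵥ ((F₂ x₁ x₂ t + (F₂ x₁ x₂ t)ᵀ) *ᵥ v) ≤ -2 * lam₂ * (v ⬝ᵥ v))
    (hbound : ∀ x₁ x₂ t v, Real.sqrt ((F₂₁ x₁ x₂ t *ᵥ v) ⬝ᵥ (F₂₁ x₁ x₂ t *ᵥ v))
        ≤ B * Real.sqrt (v ⬝ᵥ v)) :
    ∃ C : ℝ, 1 ≤ C ∧ ∃ lam : ℝ, 0 < lam ∧
      ∀ (x₁ y₁ : ℝ → Fin n₁ → ℝ) (x₂ y₂ : ℝ → Fin n₂ → ℝ),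
        (∀ t, t₀ ≤ t → HasDerivAt x₁ (f₁ (x₁ t) t) t) →
        (∀ t, t₀ ≤ t → HasDerivAt y₁ (f₁ (y₁ t) t) t) →
        (∀ t, t₀ ≤ t → HasDerivAt x₂ (f₂ (x₁ t) (x₂ t) t) t) →
        (∀ t, t₀ ≤ t → HasDerivAt y₂ (f₂ (y₁ t) (y₂ t) t) t) →
        ∀ t, t₀ ≤ t →
          Real.sqrt ((x₁ t - y₁ t) ⬝ᵥ (x₁ t - y₁ t) + (x₂ t - y₂ t) ⬝ᵥ (x₂ t - y₂ t))
            ≤ C * Real.exp (-lam * (t - t₀)) *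
              Real.sqrt ((x₁ t₀ - y₁ t₀) ⬝ᵥ (x₁ t₀ - y₁ t₀)
                + (x₂ t₀ - y₂ t₀) ⬝ᵥ (x₂ t₀ - y₂ t₀)) := by
  set lam' : ℝ := min lam₁ lam₂ with hlam'def
  have hlam' : 0 < lam' := lt_min hlam₁ hlam₂
  set α : ℝ := max 1 (B ^ 2 / (lam₁ * lam₂)) with hαdef
  have hα1 : (1 : ℝ) ≤ α := le_max_left _ _
  have hα0 : (0 : ℝ) < α := lt_of_lt_of_le one_pos hα1
  have hαB : B ^ 2 ≤ α * (lam₁ * lam₂) := by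
    have h12 : 0 < lam₁ * lam₂ := mul_pos hlam₁ hlam₂
    have := le_max_right 1 (B ^ 2 / (lam₁ * lam₂))
    calc B ^ 2 = B ^ 2 / (lam₁ * lam₂) * (lam₁ * lam₂) := by field_simp
      _ ≤ α * (lam₁ * lam₂) := by
          apply mul_le_mul_of_nonneg_right _ h12.le
          exact this
  refine ⟨Real.sqrt α, ?_, lam' / 2, by positivity, ?_⟩
  · rw [show (1:ℝ) = Real.sqrt 1 by simp]
    exact Real.sqrt_le_sqrt hα1
  intro x₁ y₁ x₂ y₂ hx₁ hy₁ hx₂ hy₂ t ht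
  set u : ℝ → Fin n₁ → ℝ := fun s => x₁ s - y₁ s with hu
  set w : ℝ → Fin n₂ → ℝ := fun s => x₂ s - y₂ s with hw
  set V : ℝ → ℝ := fun s => α * (u s ⬝ᵥ u s) + (w s ⬝ᵥ w s) with hV
  -- derivative data
  have hud : ∀ s, t₀ ≤ s → HasDerivAt u (f₁ (x₁ s) s - f₁ (y₁ s) s) s :=
    fun s hs => (hx₁ s hs).sub (hy₁ s hs)
  have hwd : ∀ s, t₀ ≤ s →
      HasDerivAt w (f₂ (x₁ s) (x₂ s) s - f₂ (y₁ s) (y₂ s) s) s :=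
    fun s hs => (hx₂ s hs).sub (hy₂ s hs)
  have hVd : ∀ s, t₀ ≤ s → HasDerivAt V
      (α * (2 * (u s ⬝ᵥ (f₁ (x₁ s) s - f₁ (y₁ s) s)))
        + 2 * (w s ⬝ᵥ (f₂ (x₁ s) (x₂ s) s - f₂ (y₁ s) (y₂ s) s))) s :=
    fun s hs => ((hasDerivAtDotSelf (hud s hs)).const_mul α).add
      (hasDerivAtDotSelf (hwd s hs))
  -- pointwise bounds
  have hUb : ∀ s, t₀ ≤ s →
      u s ⬝ᵥ (f₁ (x₁ s) s - f₁ (y₁ s) s) ≤ -lam₁ * (u s ⬝ᵥ u s) := by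
    intro s hs
    apply segIneq (fun y => f₁ y s) (fun x => F₁ x s) (fun x => hF₁ x s)
    intro x
    rw [show x₁ s - y₁ s = u s from rfl, dotSym]
    have := hc₁ x s hs (u s)
    linarith
  have hWb : ∀ s, t₀ ≤ s →
      w s ⬝ᵥ (f₂ (x₁ s) (x₂ s) s - f₂ (y₁ s) (y₂ s) s)
        ≤ -lam₂ * (w s ⬝ᵥ w s)
          + Real.sqrt (w s ⬝ᵥ w s) * (B * Real.sqrt (u s ⬝ᵥ u s)) := by
    intro s hs
    have hsplit : f₂ (x₁ s) (x₂ s) s - f₂ (y₁ s) (y₂ s) s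
        = (f₂ (x₁ s) (x₂ s) s - f₂ (x₁ s) (y₂ s) s)
          + (f₂ (x₁ s) (y₂ s) s - f₂ (y₁ s) (y₂ s) s) := by abel
    rw [hsplit, dotProduct_add]
    have h1 : w s ⬝ᵥ (f₂ (x₁ s) (x₂ s) s - f₂ (x₁ s) (y₂ s) s)
        ≤ -lam₂ * (w s ⬝ᵥ w s) := by
      apply segIneq (fun y => f₂ (x₁ s) y s) (fun y => F₂ (x₁ s) y s)
        (fun y => hF₂ (x₁ s) y s)
      intro x
      rw [show x₂ s - y₂ s = w s from rfl, dotSym]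
      have := hc₂ (x₁ s) x s hs (w s)
      linarith
    have h2 : w s ⬝ᵥ (f₂ (x₁ s) (y₂ s) s - f₂ (y₁ s) (y₂ s) s)
        ≤ Real.sqrt (w s ⬝ᵥ w s) * (B * Real.sqrt (u s ⬝ᵥ u s)) := by
      apply segIneq (fun z => f₂ z (y₂ s) s) (fun z => F₂₁ z (y₂ s) s)
        (fun z => hF₂₁ z (y₂ s) s)
      intro x
      rw [show x₁ s - y₁ s = u s from rfl]
      calc w s ⬝ᵥ (F₂₁ x (y₂ s) s *ᵥ u s)
          ≤ Real.sqrt (w s ⬝ᵥ w s)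
            * Real.sqrt ((F₂₁ x (y₂ s) s *ᵥ u s) ⬝ᵥ (F₂₁ x (y₂ s) s *ᵥ u s)) :=
            dotCS _ _
        _ ≤ Real.sqrt (w s ⬝ᵥ w s) * (B * Real.sqrt (u s ⬝ᵥ u s)) :=
            mul_le_mul_of_nonneg_left (hbound x (y₂ s) s (u s)) (Real.sqrt_nonneg _)
    linarith
  -- combined derivative bound: V' ≤ -lam' * V
  have hkey : ∀ s, t₀ ≤ s →
      α * (2 * (u s ⬝ᵥ (f₁ (x₁ s) s - f₁ (y₁ s) s)))
        + 2 * (w s ⬝ᵥ (f₂ (x₁ s) (x₂ s) s - f₂ (y₁ s) (y₂ s) s))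
      ≤ -lam' * V s := by
    intro s hs
    have hU := hUb s hs
    have hW := hWb s hs
    set a : ℝ := Real.sqrt (u s ⬝ᵥ u s) with ha
    set b : ℝ := Real.sqrt (w s ⬝ᵥ w s) with hb
    have ha2 : a ^ 2 = u s ⬝ᵥ u s := Real.sq_sqrt (dotSelfNonneg _)
    have hb2 : b ^ 2 = w s ⬝ᵥ w s := Real.sq_sqrt (dotSelfNonneg _)
    have ha0 : 0 ≤ a := Real.sqrt_nonneg _
    have hb0 : 0 ≤ b := Real.sqrt_nonneg _
    have hl1 : lam' ≤ lam₁ := min_le_left _ _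
    have hl2 : lam' ≤ lam₂ := min_le_right _ _
    have hcs : 2 * B * a * b * lam₂ ≤ B ^ 2 * a ^ 2 + lam₂ ^ 2 * b ^ 2 := by
      nlinarith [sq_nonneg (B * a - lam₂ * b)]
    have hB2 : B ^ 2 * a ^ 2 ≤ (2 * lam₁ - lam') * α * lam₂ * a ^ 2 := by
      have h1 : B ^ 2 ≤ (2 * lam₁ - lam') * α * lam₂ := by nlinarith
      nlinarith [sq_nonneg a]
    have hLb : lam₂ ^ 2 * b ^ 2 ≤ (2 * lam₂ - lam') * lam₂ * b ^ 2 := by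
      have h0 : 0 ≤ (lam₂ - lam') * lam₂ * b ^ 2 :=
        mul_nonneg (mul_nonneg (by linarith) hlam₂.le) (sq_nonneg b)
      nlinarith
    have hVeq : V s = α * a ^ 2 + b ^ 2 := by rw [hV]; rw [ha2, hb2]
    rw [hVeq]
    have hmain : 2 * B * a * b ≤ (2 * lam₁ - lam') * α * a ^ 2 + (2 * lam₂ - lam') * b ^ 2 := by
      rw [← mul_le_mul_iff_right₀ hlam₂]
      nlinarith [hcs, hB2, hLb]
    rw [← ha2] at hU
    rw [← hb2] at hW
    have hUα := mul_le_mul_of_nonneg_left hU hα0.le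
    nlinarith [hmain, hW, hUα]
  -- Gronwall via monotonicity of G s = V s * exp (lam' * (s - t₀))
  set G : ℝ → ℝ := fun s => V s * Real.exp (lam' * (s - t₀)) with hG
  have hGd : ∀ s, t₀ ≤ s → HasDerivAt G
      ((α * (2 * (u s ⬝ᵥ (f₁ (x₁ s) s - f₁ (y₁ s) s)))
        + 2 * (w s ⬝ᵥ (f₂ (x₁ s) (x₂ s) s - f₂ (y₁ s) (y₂ s) s))) * Real.exp (lam' * (s - t₀))
        + V s * (Real.exp (lam' * (s - t₀)) * lam')) s := by
    intro s hs
    have he : HasDerivAt (fun s => Real.exp (lam' * (s - t₀)))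
        (Real.exp (lam' * (s - t₀)) * lam') s := by
      have h0 : HasDerivAt (fun s : ℝ => lam' * (s - t₀)) lam' s := by
        simpa using ((hasDerivAt_id s).sub_const t₀).const_mul lam'
      exact h0.exp
    exact (hVd s hs).mul he
  have hanti : AntitoneOn G (Set.Ici t₀) := by
    apply antitoneOn_of_deriv_nonpos (convex_Ici t₀)
    · intro s hs
      exact ((hGd s hs).continuousAt).continuousWithinAt
    · intro s hs
      rw [interior_Ici] at hs
      exact ((hGd s (le_of_lt hs)).differentiableAt).differentiableWithinAt
    · intro s hs
      rw [interior_Ici] at hs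
      rw [(hGd s (le_of_lt hs)).deriv]
      have hk := hkey s (le_of_lt hs)
      have hexp : 0 < Real.exp (lam' * (s - t₀)) := Real.exp_pos _
      have hke := mul_le_mul_of_nonneg_right hk hexp.le
      nlinarith [hke]
  have hGle : G t ≤ G t₀ := hanti (Set.self_mem_Ici) ht ht
  have hexp0 : Real.exp (lam' * (t₀ - t₀)) = 1 := by simp
  have hVt : V t ≤ Real.exp (-lam' * (t - t₀)) * V t₀ := by
    have hexppos : 0 < Real.exp (lam' * (t - t₀)) := Real.exp_pos _
    have : V t * Real.exp (lam' * (t - t₀)) ≤ V t₀ := by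
      have := hGle
      rw [hG] at this
      simpa [hexp0] using this
    have h2 := mul_le_mul_of_nonneg_right this (Real.exp_nonneg (-lam' * (t - t₀)))
    rw [mul_assoc, ← Real.exp_add] at h2
    simp only [show lam' * (t - t₀) + -lam' * (t - t₀) = 0 by ring, Real.exp_zero, mul_one] at h2
    linarith [h2]
  -- final estimates
  have hU0 : 0 ≤ u t ⬝ᵥ u t := dotSelfNonneg _
  have hW0 : 0 ≤ w t ⬝ᵥ w t := dotSelfNonneg _
  have hU0' : 0 ≤ u t₀ ⬝ᵥ u t₀ := dotSelfNonneg _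
  have hW0' : 0 ≤ w t₀ ⬝ᵥ w t₀ := dotSelfNonneg _
  have h1 : u t ⬝ᵥ u t + w t ⬝ᵥ w t ≤ V t := by
    have := mul_le_mul_of_nonneg_right hα1 hU0
    rw [hV]
    simp only []
    nlinarith [this]
  have h3 : V t₀ ≤ α * (u t₀ ⬝ᵥ u t₀ + w t₀ ⬝ᵥ w t₀) := by
    have := mul_le_mul_of_nonneg_right hα1 hW0'
    rw [hV]
    simp only []
    nlinarith [this]
  have hfinal : u t ⬝ᵥ u t + w t ⬝ᵥ w t
      ≤ Real.exp (-lam' * (t - t₀)) * (α * (u t₀ ⬝ᵥ u t₀ + w t₀ ⬝ᵥ w t₀)) := by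
    have hexppos : (0:ℝ) ≤ Real.exp (-lam' * (t - t₀)) := Real.exp_nonneg _
    calc u t ⬝ᵥ u t + w t ⬝ᵥ w t ≤ V t := h1
      _ ≤ Real.exp (-lam' * (t - t₀)) * V t₀ := hVt
      _ ≤ Real.exp (-lam' * (t - t₀)) * (α * (u t₀ ⬝ᵥ u t₀ + w t₀ ⬝ᵥ w t₀)) :=
          mul_le_mul_of_nonneg_left h3 hexppos
  have hsq : Real.sqrt (u t ⬝ᵥ u t + w t ⬝ᵥ w t)
      ≤ Real.sqrt (Real.exp (-lam' * (t - t₀)) * (α * (u t₀ ⬝ᵥ u t₀ + w t₀ ⬝ᵥ w t₀))) :=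
    Real.sqrt_le_sqrt hfinal
  have hsqexp : Real.sqrt (Real.exp (-lam' * (t - t₀))) = Real.exp (-(lam' / 2) * (t - t₀)) := by
    rw [show Real.exp (-lam' * (t - t₀))
        = Real.exp (-(lam' / 2) * (t - t₀)) * Real.exp (-(lam' / 2) * (t - t₀)) by
      rw [← Real.exp_add]; ring_nf]
    exact Real.sqrt_mul_self (Real.exp_nonneg _)
  have hrw : Real.sqrt (Real.exp (-lam' * (t - t₀)) * (α * (u t₀ ⬝ᵥ u t₀ + w t₀ ⬝ᵥ w t₀)))
      = Real.sqrt α * Real.exp (-(lam' / 2) * (t - t₀))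
          * Real.sqrt (u t₀ ⬝ᵥ u t₀ + w t₀ ⬝ᵥ w t₀) := by
    rw [Real.sqrt_mul (Real.exp_nonneg _), Real.sqrt_mul hα0.le, hsqexp]
    ring
  calc Real.sqrt ((x₁ t - y₁ t) ⬝ᵥ (x₁ t - y₁ t) + (x₂ t - y₂ t) ⬝ᵥ (x₂ t - y₂ t))
      = Real.sqrt (u t ⬝ᵥ u t + w t ⬝ᵥ w t) := rfl
    _ ≤ Real.sqrt α * Real.exp (-(lam' / 2) * (t - t₀))
          * Real.sqrt (u t₀ ⬝ᵥ u t₀ + w t₀ ⬝ᵥ w t₀) := by rw [← hrw]; exact hsq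
    _ = Real.sqrt α * Real.exp (-(lam' / 2) * (t - t₀))
          * Real.sqrt ((x₁ t₀ - y₁ t₀) ⬝ᵥ (x₁ t₀ - y₁ t₀)
            + (x₂ t₀ - y₂ t₀) ⬝ᵥ (x₂ t₀ - y₂ t₀)) := rfl
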